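/- arXiv:1010.0751 — 3 statements merged into one kernel-verified Lean document; each statement's English description precedes it below -/
import Mathlib

section
/- The Lyapunov exponent is upper-semicontinuous on frequencies and continuous M₂(ℂ)-cocycles: if β_n → β in ℝ and D_n → D uniformly on ℝ, where D and all D_n are continuous 1-periodic functions ℝ → M₂(ℂ), then limsup_{n→∞} L(β_n, D_n) ≤ L(β, D) in ℝ ∪ {−∞}. -/
open MeasureTheory Filter Complex
open scoped ENNReal Real NNReal

noncomputable section

attribute [local instance] Matrix.frobeniusNormedAddCommGroup

/-- The `n`-step cocycle iterate `D^{(n)}_β(x) = D(x+(n-1)β)⋯D(x)`. -/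
def cocycleIter (D : ℝ → Matrix (Fin 2) (Fin 2) ℂ) (β : ℝ) : ℕ → ℝ → Matrix (Fin 2) (Fin 2) ℂ
  | 0, _ => 1
  | n + 1, x => cocycleIter D β n (x + β) * D x

/-- The extended-real-valued integral `∫₀¹ log (g x) dx`, with value `-∞` allowed
(the positive and negative parts are integrated separately; `log 0 = -∞`). -/
def logIntegral (g : ℝ → ℝ) : EReal :=
  ((∫⁻ x in Set.Ioc (0 : ℝ) 1, ENNReal.ofReal (Real.log (g x))) : EReal) -
    ((∫⁻ x in Set.Ioc (0 : ℝ) 1,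
        if g x = 0 then (⊤ : ℝ≥0∞) else ENNReal.ofReal (-Real.log (g x))) : EReal)

/-- The Lyapunov exponent `L(β, D) = inf_{n ≥ 1} (1/n) ∫₀¹ log ‖D^{(n)}_β(x)‖ dx ∈ ℝ ∪ {-∞}`. -/
def lyapunov (β : ℝ) (D : ℝ → Matrix (Fin 2) (Fin 2) ℂ) : EReal :=
  ⨅ n : ℕ, ((((n : ℝ) + 1)⁻¹ : ℝ) : EReal) * logIntegral fun x => ‖cocycleIter D β (n + 1) x‖

section auxiliary

open scoped Topology

private lemma cocycleIter_cont {D : ℝ → Matrix (Fin 2) (Fin 2) ℂ} (hD : Continuous D) (β : ℝ) :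
    ∀ k, Continuous (cocycleIter D β k)
  | 0 => continuous_const
  | (k+1) => ((cocycleIter_cont hD β k).comp (continuous_id.add continuous_const)).matrix_mul hD

private lemma key_unif
    (β : ℝ) (βseq : ℕ → ℝ)
    (D : ℝ → Matrix (Fin 2) (Fin 2) ℂ) (Dseq : ℕ → ℝ → Matrix (Fin 2) (Fin 2) ℂ)
    (hD : Continuous D)
    (hβ : Tendsto βseq atTop (nhds β))
    (hunif : TendstoUniformly Dseq D atTop) (k : ℕ) :
    ∀ (a b ε : ℝ), 0 < ε → ∀ᶠ n in atTop,
      ∀ x ∈ Set.Icc a b, ‖cocycleIter (Dseq n) (βseq n) k x - cocycleIter D β k x‖ ≤ ε := by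
  induction k with
  | zero =>
      intro a b ε hε
      filter_upwards with n x _
      simp only [cocycleIter, sub_self, norm_zero]
      exact hε.le
  | succ k ih =>
      intro a b ε hε
      set Q := cocycleIter D β k with hQ
      have hQc : Continuous Q := cocycleIter_cont hD β k
      obtain ⟨C₁, hC₁⟩ := (isCompact_Icc (a := a) (b := b)).exists_bound_of_continuousOn
        hD.continuousOn
      set MD : ℝ := max C₁ 0 with hMD
      have hMD0 : 0 ≤ MD := le_max_right _ _
      have hMDb : ∀ x ∈ Set.Icc a b, ‖D x‖ ≤ MD := fun x hx => (hC₁ x hx).trans (le_max_left _ _)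
      set a' : ℝ := a + β - 1
      set b' : ℝ := b + β + 1
      obtain ⟨C₂, hC₂⟩ := (isCompact_Icc (a := a') (b := b')).exists_bound_of_continuousOn
        hQc.continuousOn
      set MQ : ℝ := max C₂ 0 with hMQ
      have hMQ0 : 0 ≤ MQ := le_max_right _ _
      have hMQb : ∀ x ∈ Set.Icc a' b', ‖Q x‖ ≤ MQ := fun x hx => (hC₂ x hx).trans (le_max_left _ _)
      have hQuc : UniformContinuousOn Q (Set.Icc a' b') :=
        (isCompact_Icc (a := a') (b := b')).uniformContinuousOn_of_continuous hQc.continuousOn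
      set ε₁ : ℝ := ε / (4 * (MD + 1)) with hε₁
      have hε₁0 : 0 < ε₁ := by positivity
      set ε₂ : ℝ := ε / (2 * (MQ + 1)) with hε₂
      have hε₂0 : 0 < ε₂ := by positivity
      obtain ⟨δ, hδ0, hδ⟩ := Metric.uniformContinuousOn_iff.1 hQuc ε₁ hε₁0
      have e1 := ih a' b' ε₁ hε₁0
      have e2 : ∀ᶠ n in atTop, dist (βseq n) β < min δ 1 :=
        Metric.tendsto_nhds.1 hβ _ (lt_min hδ0 one_pos)
      have e3 : ∀ᶠ n in atTop, ∀ x, dist (D x) (Dseq n x) < min ε₂ 1 :=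
        Metric.tendstoUniformly_iff.1 hunif _ (lt_min hε₂0 one_pos)
      filter_upwards [e1, e2, e3] with n h1 h2 h3
      intro x hx
      have hxb : x ∈ Set.Icc a b := hx
      have hβ1 : |βseq n - β| < 1 := lt_of_lt_of_le (by simpa [Real.dist_eq] using h2)
        (min_le_right _ _)
      have hβδ : |βseq n - β| < δ := lt_of_lt_of_le (by simpa [Real.dist_eq] using h2)
        (min_le_left _ _)
      have hy : x + βseq n ∈ Set.Icc a' b' := by
        have h1' := abs_lt.1 hβ1
        constructor <;> [skip; skip] <;> simp only [a', b'] <;> nlinarith [hxb.1, hxb.2]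
      have hz : x + β ∈ Set.Icc a' b' := by
        constructor <;> simp only [a', b'] <;> nlinarith [hxb.1, hxb.2]
      have hDn : ‖Dseq n x‖ ≤ MD + 1 := by
        have := h3 x
        have hd : ‖Dseq n x - D x‖ < 1 := by
          rw [dist_comm] at this
          calc ‖Dseq n x - D x‖ = dist (Dseq n x) (D x) := (dist_eq_norm _ _).symm
          _ < min ε₂ 1 := this
          _ ≤ 1 := min_le_right _ _
        calc ‖Dseq n x‖ ≤ ‖D x‖ + ‖Dseq n x - D x‖ := by
              simpa using norm_add_le (D x) (Dseq n x - D x)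
        _ ≤ MD + 1 := add_le_add (hMDb x hxb) hd.le
      have hQdiff : ‖cocycleIter (Dseq n) (βseq n) k (x + βseq n) - Q (x + β)‖ ≤ ε₁ + ε₁ := by
        have t1 : ‖cocycleIter (Dseq n) (βseq n) k (x + βseq n) - Q (x + βseq n)‖ ≤ ε₁ :=
          h1 _ hy
        have t2 : ‖Q (x + βseq n) - Q (x + β)‖ ≤ ε₁ := by
          have hd : dist (x + βseq n) (x + β) < δ := by
            simpa [Real.dist_eq, add_sub_add_left_eq_sub] using hβδ
          have := hδ _ hy _ hz hd
          rw [dist_eq_norm] at this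
          exact this.le
        calc ‖cocycleIter (Dseq n) (βseq n) k (x + βseq n) - Q (x + β)‖
            ≤ ‖cocycleIter (Dseq n) (βseq n) k (x + βseq n) - Q (x + βseq n)‖
              + ‖Q (x + βseq n) - Q (x + β)‖ := by
              simpa using norm_add_le (cocycleIter (Dseq n) (βseq n) k (x + βseq n) - Q (x + βseq n))
                (Q (x + βseq n) - Q (x + β))
        _ ≤ ε₁ + ε₁ := add_le_add t1 t2
      have hDdiff : ‖Dseq n x - D x‖ ≤ ε₂ := by
        have := h3 x
        rw [dist_comm, dist_eq_norm] at this
        exact this.le.trans (min_le_left _ _)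
      have keycalc : cocycleIter (Dseq n) (βseq n) (k+1) x - cocycleIter D β (k+1) x
          = (cocycleIter (Dseq n) (βseq n) k (x + βseq n) - Q (x + β)) * Dseq n x
            + Q (x + β) * (Dseq n x - D x) := by
        simp only [cocycleIter, hQ]
        rw [sub_mul, mul_sub]
        abel
      rw [keycalc]
      have hQz : ‖Q (x + β)‖ ≤ MQ := hMQb _ hz
      calc ‖(cocycleIter (Dseq n) (βseq n) k (x + βseq n) - Q (x + β)) * Dseq n x
            + Q (x + β) * (Dseq n x - D x)‖
          ≤ ‖(cocycleIter (Dseq n) (βseq n) k (x + βseq n) - Q (x + β)) * Dseq n x‖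
            + ‖Q (x + β) * (Dseq n x - D x)‖ := norm_add_le _ _
      _ ≤ ‖cocycleIter (Dseq n) (βseq n) k (x + βseq n) - Q (x + β)‖ * ‖Dseq n x‖
            + ‖Q (x + β)‖ * ‖Dseq n x - D x‖ :=
          add_le_add (Matrix.frobenius_norm_mul _ _) (Matrix.frobenius_norm_mul _ _)
      _ ≤ (ε₁ + ε₁) * (MD + 1) + MQ * ε₂ := by
          refine add_le_add (mul_le_mul hQdiff hDn (norm_nonneg _) (by positivity)) ?_
          exact mul_le_mul hQz hDdiff (norm_nonneg _) hMQ0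
      _ ≤ ε := by
          have e1' : (ε₁ + ε₁) * (MD + 1) = ε / 2 := by
            rw [hε₁]; field_simp; ring
          have e2a : MQ * ε₂ ≤ (MQ + 1) * ε₂ := by nlinarith
          have e2b : (MQ + 1) * ε₂ = ε / 2 := by
            rw [hε₂]; field_simp
          linarith

private lemma logIntegral_mono {g₁ g₂ : ℝ → ℝ} (h0 : ∀ x ∈ Set.Ioc (0:ℝ) 1, 0 ≤ g₁ x)
    (h : ∀ x ∈ Set.Ioc (0:ℝ) 1, g₁ x ≤ g₂ x) : logIntegral g₁ ≤ logIntegral g₂ := by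
  refine EReal.sub_le_sub ?_ ?_
  · refine EReal.coe_ennreal_le_coe_ennreal_iff.2 (setLIntegral_mono' measurableSet_Ioc ?_)
    intro x hx
    rcases (h0 x hx).eq_or_lt with h1 | h1
    · have : Real.log (g₁ x) = 0 := by rw [← h1, Real.log_zero]
      simp [this]
    · exact ENNReal.ofReal_le_ofReal (Real.log_le_log h1 (h x hx))
  · refine EReal.coe_ennreal_le_coe_ennreal_iff.2 (setLIntegral_mono' measurableSet_Ioc ?_)
    intro x hx
    rcases (h0 x hx).eq_or_lt with h1 | h1
    · rw [if_pos h1.symm]; exact le_top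
    · rw [if_neg h1.ne', if_neg (ne_of_gt (lt_of_lt_of_le h1 (h x hx)))]
      exact ENNReal.ofReal_le_ofReal (by
        have := Real.log_le_log h1 (h x hx); linarith)

private lemma logIntegral_tendsto (g : ℝ → ℝ) (hg : Continuous g) (hg0 : ∀ x, 0 ≤ g x) :
    Tendsto (fun m : ℕ => logIntegral fun x => g x + ((m:ℝ)+1)⁻¹) atTop (𝓝 (logIntegral g)) := by
  set ε : ℕ → ℝ := fun m => ((m:ℝ)+1)⁻¹ with hε
  have hε0 : ∀ m, 0 < ε m := fun m => by positivity
  have hε1 : ∀ m, ε m ≤ 1 := fun m => by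
    rw [hε]; rw [inv_le_one_iff₀]; right; linarith [Nat.cast_nonneg (α := ℝ) m]
  have hεanti : ∀ m m' : ℕ, m ≤ m' → ε m' ≤ ε m := by
    intro m m' hmm
    apply inv_anti₀ (by positivity)
    exact add_le_add_left (Nat.cast_le.2 hmm) 1
  have hεtend : Tendsto ε atTop (𝓝 0) := by
    simpa [hε, one_div] using (tendsto_one_div_add_atTop_nhds_zero_nat : Tendsto (fun n : ℕ => 1 / ((n:ℝ) + 1)) atTop (𝓝 0))
  set fA : ℕ → ℝ → ℝ≥0∞ := fun m x => ENNReal.ofReal (Real.log (g x + ε m)) with hfA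
  set fB : ℕ → ℝ → ℝ≥0∞ := fun m x => ENNReal.ofReal (-Real.log (g x + ε m)) with hfB
  have hgpos : ∀ m x, 0 < g x + ε m := fun m x => by have := hg0 x; have := hε0 m; positivity
  have hfAanti : Antitone fA := by
    intro m m' hmm x
    exact ENNReal.ofReal_le_ofReal (Real.log_le_log (hgpos m' x) (by linarith [hεanti m m' hmm]))
  have hfBmono : Monotone fB := by
    intro m m' hmm x
    refine ENNReal.ofReal_le_ofReal ?_
    have := Real.log_le_log (hgpos m' x) (by linarith [hεanti m m' hmm] : g x + ε m' ≤ g x + ε m)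
    linarith
  set A : ℕ → ℝ≥0∞ := fun m => ∫⁻ x in Set.Ioc (0:ℝ) 1, fA m x with hA
  set B : ℕ → ℝ≥0∞ := fun m => ∫⁻ x in Set.Ioc (0:ℝ) 1, fB m x with hB
  have hAmeas : ∀ m, Measurable (fA m) := fun m =>
    ENNReal.measurable_ofReal.comp (Real.measurable_log.comp ((hg.measurable).add_const _))
  have hBmeas : ∀ m, Measurable (fB m) := fun m =>
    ENNReal.measurable_ofReal.comp ((Real.measurable_log.comp ((hg.measurable).add_const _)).neg)
  have hId : ∀ m, logIntegral (fun x => g x + ε m) = (A m : EReal) - (B m : EReal) := by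
    intro m
    unfold logIntegral
    congr 2
    apply lintegral_congr
    intro x
    rw [if_neg (hgpos m x).ne']
  have hAanti : Antitone A := fun m m' hmm => lintegral_mono fun x => hfAanti hmm x
  have hBmono : Monotone B := fun m m' hmm => lintegral_mono fun x => hfBmono hmm x
  obtain ⟨M, hM⟩ := (isCompact_Icc (a := (0:ℝ)) (b := 1)).exists_bound_of_continuousOn
    hg.continuousOn
  have hA0top : A 0 ≠ ⊤ := by
    have hb : A 0 ≤ ∫⁻ _x in Set.Ioc (0:ℝ) 1, ENNReal.ofReal (Real.log (M + 1)) := by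
      refine setLIntegral_mono' measurableSet_Ioc fun x hx => ?_
      refine ENNReal.ofReal_le_ofReal (Real.log_le_log (hgpos 0 x) ?_)
      have hgx : g x ≤ M := (le_abs_self _).trans (hM x (Set.Ioc_subset_Icc_self hx))
      have := hε1 0; linarith
    refine ne_top_of_le_ne_top ?_ hb
    rw [setLIntegral_const]
    exact ENNReal.mul_ne_top ENNReal.ofReal_ne_top (by simp [Real.volume_Ioc])
  have hAiInf : (⨅ m, A m) = ∫⁻ x in Set.Ioc (0:ℝ) 1, ENNReal.ofReal (Real.log (g x)) := by
    rw [hA]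
    rw [← lintegral_iInf hAmeas hfAanti hA0top]
    apply lintegral_congr
    intro x
    rcases (hg0 x).eq_or_lt with h1 | h1
    · have hz : ∀ m, fA m x = 0 := by
        intro m
        rw [hfA]
        simp only [← h1, zero_add]
        exact ENNReal.ofReal_eq_zero.2 (Real.log_nonpos (hε0 m).le (hε1 m))
      simp [hz, ← h1]
    · have htend : Tendsto (fun m => fA m x) atTop (𝓝 (ENNReal.ofReal (Real.log (g x)))) := by
        apply ENNReal.tendsto_ofReal
        have h2 : Tendsto (fun m => g x + ε m) atTop (𝓝 (g x)) := by
          simpa using tendsto_const_nhds.add hεtend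
        exact (Real.continuousAt_log h1.ne').tendsto.comp h2
      exact tendsto_nhds_unique (tendsto_atTop_iInf fun m m' hmm => hfAanti hmm x) htend
  have hBiSup : (⨆ m, B m) = ∫⁻ x in Set.Ioc (0:ℝ) 1,
      (if g x = 0 then (⊤:ℝ≥0∞) else ENNReal.ofReal (-Real.log (g x))) := by
    rw [hB, ← lintegral_iSup hBmeas hfBmono]
    apply lintegral_congr
    intro x
    rcases (hg0 x).eq_or_lt with h1 | h1
    · rw [if_pos h1.symm]
      have htend : Tendsto (fun m => fB m x) atTop (𝓝 ⊤) := by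
        apply ENNReal.tendsto_ofReal_nhds_top.2
        have : ∀ m, -Real.log (g x + ε m) = Real.log ((m:ℝ)+1) := by
          intro m
          rw [← h1, zero_add, hε, ← Real.log_inv, inv_inv]
        simp only [this]
        exact Real.tendsto_log_atTop.comp (tendsto_atTop_add_const_right _ 1
          tendsto_natCast_atTop_atTop)
      exact (tendsto_nhds_unique (tendsto_atTop_iSup fun m m' hmm => hfBmono hmm x) htend)
    · rw [if_neg h1.ne']
      have htend : Tendsto (fun m => fB m x) atTop (𝓝 (ENNReal.ofReal (-Real.log (g x)))) := by
        apply ENNReal.tendsto_ofReal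
        have h2 : Tendsto (fun m => g x + ε m) atTop (𝓝 (g x)) := by
          simpa using tendsto_const_nhds.add hεtend
        exact (((Real.continuousAt_log h1.ne').tendsto.comp h2)).neg
      exact tendsto_nhds_unique (tendsto_atTop_iSup fun m m' hmm => hfBmono hmm x) htend
  have hAne : (⨅ m, A m) ≠ ⊤ := fun h => hA0top (top_le_iff.1 (h ▸ iInf_le A 0))
  have htendA : Tendsto (fun m => ((A m : ℝ≥0∞) : EReal)) atTop (𝓝 ((⨅ m, A m : ℝ≥0∞) : EReal)) :=
    EReal.tendsto_coe_ennreal.2 (tendsto_atTop_iInf hAanti)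
  have htendB : Tendsto (fun m => ((B m : ℝ≥0∞) : EReal)) atTop (𝓝 ((⨆ m, B m : ℝ≥0∞) : EReal)) :=
    EReal.tendsto_coe_ennreal.2 (tendsto_atTop_iSup hBmono)
  have htendnB : Tendsto (fun m => -((B m : ℝ≥0∞) : EReal)) atTop
      (𝓝 (-((⨆ m, B m : ℝ≥0∞) : EReal))) := htendB.neg
  have hadd : ContinuousAt (fun p : EReal × EReal => p.1 + p.2)
      (((⨅ m, A m : ℝ≥0∞) : EReal), -((⨆ m, B m : ℝ≥0∞) : EReal)) := by
    apply EReal.continuousAt_add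
    · exact Or.inl (by simpa [EReal.coe_ennreal_eq_top_iff] using hAne)
    · exact Or.inl (EReal.coe_ennreal_ne_bot _)
  have hmain : Tendsto (fun m => ((A m : ℝ≥0∞) : EReal) - ((B m : ℝ≥0∞) : EReal)) atTop
      (𝓝 (((⨅ m, A m : ℝ≥0∞) : EReal) - ((⨆ m, B m : ℝ≥0∞) : EReal))) := by
    have := hadd.tendsto.comp (htendA.prodMk_nhds htendnB)
    simpa [sub_eq_add_neg, Function.comp_def] using this
  have hfinal : logIntegral g = (((⨅ m, A m : ℝ≥0∞) : EReal) - ((⨆ m, B m : ℝ≥0∞) : EReal)) := by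
    unfold logIntegral
    rw [hAiInf, hBiSup]
  rw [hfinal]
  have heq : (fun m : ℕ => logIntegral fun x => g x + ((m:ℝ)+1)⁻¹)
      = fun m => ((A m : ℝ≥0∞) : EReal) - ((B m : ℝ≥0∞) : EReal) := funext fun m => hId m
  rw [heq]
  exact hmain

end auxiliary

/-- Upper semicontinuity of the Lyapunov exponent on continuous
`M₂(ℂ)`-cocycles: if `βₙ → β` and `Dₙ → D` uniformly on `ℝ` (all `Dₙ`, `D` continuous and
1-periodic), then `limsup L(βₙ, Dₙ) ≤ L(β, D)` in `ℝ ∪ {-∞}`. -/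
theorem lyapunov_upper_semicontinuous
    (β : ℝ) (βseq : ℕ → ℝ)
    (D : ℝ → Matrix (Fin 2) (Fin 2) ℂ) (Dseq : ℕ → ℝ → Matrix (Fin 2) (Fin 2) ℂ)
    (hD : Continuous D) (hDper : Function.Periodic D 1)
    (hDn : ∀ n, Continuous (Dseq n)) (hDnper : ∀ n, Function.Periodic (Dseq n) 1)
    (hβ : Tendsto βseq atTop (nhds β))
    (hunif : TendstoUniformly Dseq D atTop) :
    Filter.limsup (fun n => lyapunov (βseq n) (Dseq n)) atTop ≤ lyapunov β D := by
  rw [lyapunov]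
  refine le_iInf fun k => ?_
  set c : EReal := ((((k:ℝ)+1)⁻¹ : ℝ) : EReal) with hc
  have hc0 : (0:EReal) ≤ c := by
    rw [hc]
    exact_mod_cast EReal.coe_nonneg.2 (by positivity)
  set g : ℝ → ℝ := fun x => ‖cocycleIter D β (k+1) x‖ with hgdef
  have hgc : Continuous g := (cocycleIter_cont hD β (k+1)).norm
  have hg0 : ∀ x, 0 ≤ g x := fun x => norm_nonneg _
  -- Step 1
  have h1 : Filter.limsup (fun n => lyapunov (βseq n) (Dseq n)) atTop ≤
      Filter.limsup
        (fun n => c * logIntegral fun x => ‖cocycleIter (Dseq n) (βseq n) (k+1) x‖) atTop := by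
    refine Filter.limsup_le_limsup (Eventually.of_forall fun n => ?_)
    exact iInf_le (fun j : ℕ => ((((j:ℝ)+1)⁻¹ : ℝ) : EReal) *
      logIntegral fun x => ‖cocycleIter (Dseq n) (βseq n) (j+1) x‖) k
  refine h1.trans ?_
  -- Step 2
  have h2 : ∀ m : ℕ, Filter.limsup
      (fun n => c * logIntegral fun x => ‖cocycleIter (Dseq n) (βseq n) (k+1) x‖) atTop
      ≤ c * logIntegral (fun x => g x + ((m:ℝ)+1)⁻¹) := by
    intro m
    refine Filter.limsup_le_of_le (by isBoundedDefault) ?_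
    have hev := key_unif β βseq D Dseq hD hβ hunif (k+1) 0 1 (((m:ℝ)+1)⁻¹) (by positivity)
    filter_upwards [hev] with n hn
    refine mul_le_mul_of_nonneg_left ?_ hc0
    refine logIntegral_mono (fun x _ => norm_nonneg _) ?_
    intro x hx
    have hb := hn x (Set.Ioc_subset_Icc_self hx)
    have := norm_sub_norm_le (cocycleIter (Dseq n) (βseq n) (k+1) x) (cocycleIter D β (k+1) x)
    simp only [hgdef]
    linarith
  -- Step 3
  have hcr : ((((k:ℝ)+1)⁻¹ : ℝ) : ℝ) ≠ 0 := by positivity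
  have hcne : c ≠ 0 := by rw [hc]; exact EReal.coe_ne_zero.2 hcr
  have hmul : ContinuousAt (fun p : EReal × EReal => p.1 * p.2) (c, logIntegral g) := by
    apply EReal.continuousAt_mul
    · exact Or.inl hcne
    · exact Or.inl hcne
    · exact Or.inl (by rw [hc]; exact EReal.coe_ne_bot _)
    · exact Or.inl (by rw [hc]; exact EReal.coe_ne_top _)
  have h3 : Tendsto (fun m : ℕ => c * logIntegral fun x => g x + ((m:ℝ)+1)⁻¹) atTop
      (nhds (c * logIntegral g)) := by
    have := hmul.tendsto.comp (tendsto_const_nhds.prodMk_nhds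
      (logIntegral_tendsto g hgc hg0))
    simpa [Function.comp_def] using this
  exact ge_of_tendsto' h3 h2
end
end

section
/- Let δ > 0 and let f : {z ∈ ℂ : |Im z| < δ} → ℂ be holomorphic with f(z+1) = f(z) for all z in the strip, and suppose min_{x ∈ [0,1]} |f(x)| > 0 (f does not vanish on ℝ). Then there exist δ′ ∈ (0, δ] and a holomorphic function g : {z ∈ ℂ : |Im z| < δ′} → ℂ such that g(z+2) = g(z) and g(z)² = f(z) for all z with |Im z| < δ′. (A 1-periodic analytic function nonvanishing on the reals has a 2-periodic analytic square root.) -/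
open Complex intervalIntegral
open scoped Real

noncomputable def apsE (x y : ℝ) : ℂ := x + y * Complex.I

@[simp] lemma apsE_re (x y : ℝ) : (apsE x y).re = x := by simp [apsE]
@[simp] lemma apsE_im (x y : ℝ) : (apsE x y).im = y := by simp [apsE]
@[simp] lemma apsE_self (z : ℂ) : apsE z.re z.im = z := by
  simp [apsE, Complex.re_add_im]

def apsStrip (c : ℝ) : Set ℂ := {z : ℂ | |z.im| < c}

lemma apsStrip_open (c : ℝ) : IsOpen (apsStrip c) := by
  have : apsStrip c = (fun z : ℂ => |z.im|) ⁻¹' Set.Iio c := rfl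
  rw [this]
  exact isOpen_Iio.preimage (_root_.continuous_abs.comp Complex.continuous_im)

lemma apsStrip_convex (c : ℝ) : Convex ℝ (apsStrip c) := by
  have : apsStrip c = {z : ℂ | z.im < c} ∩ {z : ℂ | -c < z.im} := by
    ext z; simp [apsStrip, abs_lt, and_comm]
  rw [this]
  exact (convex_halfSpace_im_lt c).inter (convex_halfSpace_im_gt (-c))

lemma apsE_mem_strip {c : ℝ} (x : ℝ) {y : ℝ} (hy : |y| < c) : apsE x y ∈ apsStrip c := by
  simpa [apsStrip] using hy

lemma aps_uIcc_abs_lt {c y y' : ℝ} (hy : |y| < c) (hy' : |y'| < c) {s : ℝ}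
    (hs : s ∈ Set.uIcc y y') : |s| < c := by
  rcases Set.mem_uIcc.1 hs with ⟨h1, h2⟩ | ⟨h1, h2⟩ <;>
    [skip; skip] <;>
  · rw [abs_lt] at hy hy' ⊢
    constructor <;> linarith [hy.1, hy.2, hy'.1, hy'.2]

section Prim

variable {c : ℝ} {q : ℂ → ℂ}

lemma aps_cont_horiz (hq : DifferentiableOn ℂ q (apsStrip c)) {y : ℝ} (hy : |y| < c) :
    Continuous fun t : ℝ => q (apsE t y) := by
  rw [continuous_iff_continuousAt]
  intro t
  have h1 : ContinuousAt q (apsE t y) :=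
    (hq.differentiableAt ((apsStrip_open c).mem_nhds (apsE_mem_strip t hy))).continuousAt
  have h2 : ContinuousAt (fun t : ℝ => apsE t y) t := by
    simp only [apsE]
    exact (Complex.continuous_ofReal.add continuous_const).continuousAt
  exact ContinuousAt.comp (g := q) (f := fun t : ℝ => apsE t y) h1 h2

lemma aps_cont_vert (hq : DifferentiableOn ℂ q (apsStrip c)) {y y' : ℝ} (x : ℝ)
    (hy : |y| < c) (hy' : |y'| < c) :
    ContinuousOn (fun s : ℝ => q (apsE x s)) (Set.uIcc y y') := by
  intro s hs
  have h1 : ContinuousAt q (apsE x s) :=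
    (hq.differentiableAt ((apsStrip_open c).mem_nhds
      (apsE_mem_strip x (aps_uIcc_abs_lt hy hy' hs)))).continuousAt
  have h2 : ContinuousAt (fun s : ℝ => apsE x s) s := by
    simp only [apsE]
    exact (continuous_const.add (Complex.continuous_ofReal.mul continuous_const)).continuousAt
  exact (ContinuousAt.comp (g := q) (f := fun s : ℝ => apsE x s) h1 h2).continuousWithinAt

lemma aps_int_vert (hq : DifferentiableOn ℂ q (apsStrip c)) {y y' : ℝ} (x : ℝ)
    (hy : |y| < c) (hy' : |y'| < c) :
    IntervalIntegrable (fun s : ℝ => q (apsE x s)) MeasureTheory.volume y y' :=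
  (aps_cont_vert hq x hy hy').intervalIntegrable

/-- the affine vertical path has derivative `I`. -/
lemma aps_hasDerivAt_vertPath (x : ℝ) (s : ℝ) :
    HasDerivAt (fun s : ℝ => apsE x s) Complex.I s := by
  have h : HasDerivAt (fun s : ℝ => (s : ℂ)) 1 s := Complex.ofRealCLM.hasDerivAt
  simpa [apsE] using (h.mul_const Complex.I).const_add (x : ℂ)

lemma aps_hasDerivAt_horizPath (y : ℝ) (t : ℝ) :
    HasDerivAt (fun t : ℝ => apsE t y) 1 t := by
  have h : HasDerivAt (fun t : ℝ => (t : ℂ)) 1 t := Complex.ofRealCLM.hasDerivAt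
  simpa [apsE] using h.add_const ((y : ℂ) * Complex.I)

/-- vertical FTC -/
lemma aps_vert_FTC (hq : DifferentiableOn ℂ q (apsStrip c)) {y y' : ℝ} (x : ℝ)
    (hy : |y| < c) (hy' : |y'| < c) :
    Complex.I * ∫ s in y..y', deriv q (apsE x s) = q (apsE x y') - q (apsE x y) := by
  rw [← intervalIntegral.integral_const_mul]
  refine intervalIntegral.integral_eq_sub_of_hasDerivAt
    (f := fun s : ℝ => q (apsE x s)) (fun s hs => ?_) ?_
  · have hqd : HasDerivAt q (deriv q (apsE x s)) (apsE x s) :=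
      (hq.differentiableAt ((apsStrip_open c).mem_nhds
        (apsE_mem_strip x (aps_uIcc_abs_lt hy hy' hs)))).hasDerivAt
    have := hqd.scomp (x := s) (aps_hasDerivAt_vertPath x s)
    simpa [smul_eq_mul, Function.comp_def] using this
  · have hdq : DifferentiableOn ℂ (deriv q) (apsStrip c) :=
      ((hq.analyticOnNhd (apsStrip_open c)).deriv).differentiableOn
    exact ((aps_cont_vert hdq x hy hy').intervalIntegrable).const_mul Complex.I

end Prim

section Prim2

variable {c : ℝ} {q : ℂ → ℂ}

/-- horizontal FTC -/
lemma aps_horiz_FTC (hq : DifferentiableOn ℂ q (apsStrip c)) {y : ℝ} (hy : |y| < c)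
    (x x' : ℝ) :
    ∫ t in x..x', deriv q (apsE t y) = q (apsE x' y) - q (apsE x y) := by
  refine intervalIntegral.integral_eq_sub_of_hasDerivAt
    (f := fun t : ℝ => q (apsE t y)) (fun t ht => ?_) ?_
  · have hqd : HasDerivAt q (deriv q (apsE t y)) (apsE t y) :=
      (hq.differentiableAt ((apsStrip_open c).mem_nhds (apsE_mem_strip t hy))).hasDerivAt
    have := hqd.scomp (x := t) (aps_hasDerivAt_horizPath y t)
    simpa [smul_eq_mul, Function.comp_def] using this
  · have hdq : DifferentiableOn ℂ (deriv q) (apsStrip c) :=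
      ((hq.analyticOnNhd (apsStrip_open c)).deriv).differentiableOn
    exact (aps_cont_horiz hdq hy).intervalIntegrable x x'

/-- differentiation under the vertical integral -/
lemma aps_vert_param (hq : DifferentiableOn ℂ q (apsStrip c)) {y y' : ℝ}
    (hy : |y| < c) (hy' : |y'| < c) (u₀ : ℝ) :
    HasDerivAt (fun u : ℝ => ∫ s in y..y', q (apsE u s))
      (∫ s in y..y', deriv q (apsE u₀ s)) u₀ := by
  have hdq : DifferentiableOn ℂ (deriv q) (apsStrip c) :=
    ((hq.analyticOnNhd (apsStrip_open c)).deriv).differentiableOn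
  -- compact rectangle
  set R : Set ℂ := Set.Icc (u₀ - 1) (u₀ + 1) ×ℂ Set.uIcc y y' with hR
  have hRsub : R ⊆ apsStrip c := by
    intro z hz
    rw [Complex.mem_reProdIm] at hz
    exact aps_uIcc_abs_lt hy hy' hz.2
  have hRcomp : IsCompact R := by
    refine Metric.isCompact_of_isClosed_isBounded
      (isClosed_Icc.reProdIm isClosed_Icc) ?_
    exact (Metric.isBounded_Icc _ _).reProdIm (Metric.isBounded_Icc _ _)
  obtain ⟨M, hM⟩ := hRcomp.exists_bound_of_continuousOn (hdq.continuousOn.mono hRsub)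
  have hmemR : ∀ u ∈ Metric.ball u₀ 1, ∀ s ∈ Set.uIoc y y', apsE u s ∈ R := by
    intro u hu s hs
    rw [Complex.mem_reProdIm]
    constructor
    · simp only [apsE_re]
      rw [Metric.mem_ball, Real.dist_eq, abs_lt] at hu
      exact ⟨by linarith [hu.1], by linarith [hu.2]⟩
    · simpa using Set.uIoc_subset_uIcc hs
  have key := intervalIntegral.hasDerivAt_integral_of_dominated_loc_of_deriv_le
    (F := fun (u : ℝ) (s : ℝ) => q (apsE u s))
    (F' := fun (u : ℝ) (s : ℝ) => deriv q (apsE u s))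
    (x₀ := u₀) (bound := fun _ => M) (a := y) (b := y') (s := Metric.ball u₀ 1) (μ := MeasureTheory.volume) (Metric.ball_mem_nhds u₀ one_pos)
    ?_ ?_ ?_ ?_ ?_ ?_
  · exact key.2
  · filter_upwards with u
    exact ((aps_cont_vert hq u hy hy').mono Set.uIoc_subset_uIcc).aestronglyMeasurable
      measurableSet_uIoc
  · exact aps_int_vert hq u₀ hy hy'
  · exact ((aps_cont_vert hdq u₀ hy hy').mono Set.uIoc_subset_uIcc).aestronglyMeasurable
      measurableSet_uIoc
  · filter_upwards with s hs u hu
    exact hM _ (hmemR u hu s hs)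
  · exact intervalIntegrable_const
  · filter_upwards with s hs u hu
    have hmem : apsE u s ∈ apsStrip c := hRsub (hmemR u hu s hs)
    have hqd : HasDerivAt q (deriv q (apsE u s)) (apsE u s) :=
      (hq.differentiableAt ((apsStrip_open c).mem_nhds hmem)).hasDerivAt
    have h2 : HasDerivAt (fun u : ℝ => apsE u s) 1 u := aps_hasDerivAt_horizPath s u
    have := hqd.scomp (x := u) h2
    simpa [smul_eq_mul, Function.comp_def] using this

end Prim2

section Prim3

variable {c : ℝ} {q : ℂ → ℂ}

/-- rectangle path-independence -/
lemma aps_rect (hq : DifferentiableOn ℂ q (apsStrip c)) {y y' : ℝ}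
    (hy : |y| < c) (hy' : |y'| < c) (x x' : ℝ) :
    (∫ t in x..x', q (apsE t y')) - (∫ t in x..x', q (apsE t y))
      = Complex.I * (∫ s in y..y', q (apsE x' s))
        - Complex.I * (∫ s in y..y', q (apsE x s)) := by
  set D : ℝ → ℂ := fun u =>
    (∫ t in x..u, q (apsE t y')) - (∫ t in x..u, q (apsE t y))
      - Complex.I * (∫ s in y..y', q (apsE u s)) with hD
  have hDderiv : ∀ u : ℝ, HasDerivAt D 0 u := by
    intro u
    have h1 : HasDerivAt (fun u : ℝ => ∫ t in x..u, q (apsE t y')) (q (apsE u y')) u := by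
      refine intervalIntegral.integral_hasDerivAt_right
        ((aps_cont_horiz hq hy').intervalIntegrable x u)
        ((aps_cont_horiz hq hy').stronglyMeasurableAtFilter _ _) ?_
      exact (aps_cont_horiz hq hy').continuousAt
    have h2 : HasDerivAt (fun u : ℝ => ∫ t in x..u, q (apsE t y)) (q (apsE u y)) u := by
      refine intervalIntegral.integral_hasDerivAt_right
        ((aps_cont_horiz hq hy).intervalIntegrable x u)
        ((aps_cont_horiz hq hy).stronglyMeasurableAtFilter _ _) ?_
      exact (aps_cont_horiz hq hy).continuousAt
    have h3 : HasDerivAt (fun u : ℝ => Complex.I * ∫ s in y..y', q (apsE u s))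
        (Complex.I * ∫ s in y..y', deriv q (apsE u s)) u :=
      (aps_vert_param hq hy hy' u).const_mul Complex.I
    have h4 := (h1.sub h2).sub h3
    rw [aps_vert_FTC hq u hy hy'] at h4
    exact h4.congr_deriv (by simp)
  have hconst : D x' = D x := by
    have : ∀ u : ℝ, deriv D u = 0 := fun u => (hDderiv u).deriv
    exact is_const_of_deriv_eq_zero (fun u => (hDderiv u).differentiableAt) this x' x
  simp only [hD, intervalIntegral.integral_same, sub_zero, zero_sub, sub_self] at hconst
  linear_combination hconst

end Prim3

section Prim4

variable {c : ℝ} {q : ℂ → ℂ}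

/-- difference formula for the primitive candidate -/
noncomputable def apsH (q : ℂ → ℂ) (z : ℂ) : ℂ :=
  Complex.I * (∫ s in (0:ℝ)..z.im, q (apsE 0 s)) + ∫ t in (0:ℝ)..z.re, q (apsE t z.im)

lemma apsH_zero (q : ℂ → ℂ) : apsH q 0 = 0 := by
  simp [apsH]

lemma apsH_sub (hc : 0 < c) (hq : DifferentiableOn ℂ q (apsStrip c))
    {z w : ℂ} (hz : z ∈ apsStrip c) (hw : w ∈ apsStrip c) :
    apsH q w - apsH q z = (∫ t in z.re..w.re, q (apsE t w.im))
      + Complex.I * (∫ s in z.im..w.im, q (apsE z.re s)) := by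
  have h0 : |(0:ℝ)| < c := by simpa using hc
  have hzc : |z.im| < c := hz
  have hwc : |w.im| < c := hw
  have hrect := aps_rect hq hzc hwc 0 z.re
  have hsplit1 : (∫ t in (0:ℝ)..z.re, q (apsE t w.im))
      + (∫ t in z.re..w.re, q (apsE t w.im)) = ∫ t in (0:ℝ)..w.re, q (apsE t w.im) :=
    intervalIntegral.integral_add_adjacent_intervals
      ((aps_cont_horiz hq hwc).intervalIntegrable _ _)
      ((aps_cont_horiz hq hwc).intervalIntegrable _ _)
  have hsplit2 : (∫ s in (0:ℝ)..z.im, q (apsE 0 s))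
      + (∫ s in z.im..w.im, q (apsE 0 s)) = ∫ s in (0:ℝ)..w.im, q (apsE 0 s) :=
    intervalIntegral.integral_add_adjacent_intervals
      (aps_int_vert hq 0 h0 hzc) (aps_int_vert hq 0 hzc hwc)
  simp only [apsH]
  linear_combination hrect - hsplit1 - Complex.I * hsplit2

/-- The primitive: `apsH q` has derivative `q` on the strip. -/
lemma apsH_hasDerivAt (hc : 0 < c) (hq : DifferentiableOn ℂ q (apsStrip c))
    {z : ℂ} (hz : z ∈ apsStrip c) :
    HasDerivAt (apsH q) (q z) z := by
  rw [hasDerivAt_iff_isLittleO]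
  rw [Asymptotics.isLittleO_iff]
  intro ε hε
  -- choose a ball where q is close to q z and inside the strip
  have hqc : ContinuousAt q z :=
    (hq.differentiableAt ((apsStrip_open c).mem_nhds hz)).continuousAt
  obtain ⟨r₁, hr₁, hball₁⟩ := Metric.isOpen_iff.1 (apsStrip_open c) z hz
  have hεhalf : 0 < ε / 2 := by linarith
  obtain ⟨r₂, hr₂, hball₂⟩ := Metric.continuousAt_iff.1 hqc (ε / 2) hεhalf
  set r := min r₁ r₂ with hrdef
  have hr : 0 < r := lt_min hr₁ hr₂
  have hqnear : ∀ u ∈ Metric.ball z r, ‖q u - q z‖ ≤ ε / 2 := by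
    intro u hu
    rw [Metric.mem_ball] at hu
    have := hball₂ (lt_of_lt_of_le hu (min_le_right _ _))
    rw [dist_eq_norm] at this
    exact this.le
  have hsub : Metric.ball z r ⊆ apsStrip c :=
    fun u hu => hball₁ (Metric.ball_subset_ball (min_le_left _ _) hu)
  filter_upwards [Metric.ball_mem_nhds z (half_pos hr)] with w hwball
  have hwz : ‖w - z‖ < r / 2 := by
    rw [Metric.mem_ball, dist_eq_norm] at hwball; exact hwball
  have hwmem : w ∈ apsStrip c := hsub (Metric.ball_subset_ball (by linarith) hwball)
  -- membership of path points in the ball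
  have habs_re : |w.re - z.re| ≤ ‖w - z‖ := by
    simpa [Complex.sub_re] using Complex.abs_re_le_norm (w - z)
  have habs_im : |w.im - z.im| ≤ ‖w - z‖ := by
    simpa [Complex.sub_im] using Complex.abs_im_le_norm (w - z)
  have hmem_h : ∀ t ∈ Set.uIoc z.re w.re, apsE t w.im ∈ Metric.ball z r := by
    intro t ht
    have h1 : |t - z.re| ≤ |w.re - z.re| := by
      have h2 := le_abs_self (w.re - z.re)
      have h3 := neg_abs_le (w.re - z.re)
      rcases Set.mem_uIoc.1 ht with ⟨ha, hb⟩ | ⟨ha, hb⟩ <;> rw [abs_le] <;>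
        constructor <;> linarith
    rw [Metric.mem_ball, Complex.dist_eq]
    calc ‖apsE t w.im - z‖
        ≤ |(apsE t w.im - z).re| + |(apsE t w.im - z).im| :=
          Complex.norm_le_abs_re_add_abs_im _
      _ = |t - z.re| + |w.im - z.im| := by simp [Complex.sub_re, Complex.sub_im]
      _ ≤ ‖w - z‖ + ‖w - z‖ := add_le_add (h1.trans habs_re) habs_im
      _ < r := by linarith
  have hmem_v : ∀ s ∈ Set.uIoc z.im w.im, apsE z.re s ∈ Metric.ball z r := by
    intro s hs
    have h1 : |s - z.im| ≤ |w.im - z.im| := by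
      have h2 := le_abs_self (w.im - z.im)
      have h3 := neg_abs_le (w.im - z.im)
      rcases Set.mem_uIoc.1 hs with ⟨ha, hb⟩ | ⟨ha, hb⟩ <;> rw [abs_le] <;>
        constructor <;> linarith
    rw [Metric.mem_ball, Complex.dist_eq]
    calc ‖apsE z.re s - z‖
        ≤ |(apsE z.re s - z).re| + |(apsE z.re s - z).im| :=
          Complex.norm_le_abs_re_add_abs_im _
      _ = |s - z.im| := by simp [Complex.sub_re, Complex.sub_im]
      _ ≤ ‖w - z‖ := h1.trans habs_im
      _ < r := by linarith
  -- the difference identity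
  have hkey := apsH_sub hc hq hz hwmem
  have hwzdecomp : ((w.re - z.re : ℝ) : ℂ) + ((w.im - z.im : ℝ) : ℂ) * Complex.I = w - z := by
    apply Complex.ext <;> simp
  have hzwim : |z.im| < c := hz
  have hwwim : |w.im| < c := hwmem
  have hint_h : IntervalIntegrable (fun t : ℝ => q (apsE t w.im))
      MeasureTheory.volume z.re w.re := (aps_cont_horiz hq hwwim).intervalIntegrable _ _
  have hint_v : IntervalIntegrable (fun s : ℝ => q (apsE z.re s))
      MeasureTheory.volume z.im w.im := aps_int_vert hq z.re hzwim hwwim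
  have hid : apsH q w - apsH q z - (w - z) • q z
      = (∫ t in z.re..w.re, (q (apsE t w.im) - q z))
        + Complex.I * (∫ s in z.im..w.im, (q (apsE z.re s) - q z)) := by
    rw [intervalIntegral.integral_sub hint_h intervalIntegrable_const,
      intervalIntegral.integral_sub hint_v intervalIntegrable_const]
    rw [intervalIntegral.integral_const, intervalIntegral.integral_const]
    rw [hkey]
    simp only [smul_eq_mul, Complex.real_smul]
    linear_combination (q z) * hwzdecomp
  rw [hid]
  -- norm estimates
  have hest_h : ‖∫ t in z.re..w.re, (q (apsE t w.im) - q z)‖ ≤ ε / 2 * |w.re - z.re| := by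
    have := intervalIntegral.norm_integral_le_of_norm_le_const
      (C := ε / 2) (f := fun t : ℝ => q (apsE t w.im) - q z) (a := z.re) (b := w.re)
      (fun t ht => hqnear _ (hmem_h t ht))
    simpa [abs_sub_comm] using this
  have hest_v : ‖∫ s in z.im..w.im, (q (apsE z.re s) - q z)‖ ≤ ε / 2 * |w.im - z.im| := by
    have := intervalIntegral.norm_integral_le_of_norm_le_const
      (C := ε / 2) (f := fun s : ℝ => q (apsE z.re s) - q z) (a := z.im) (b := w.im)
      (fun s hs => hqnear _ (hmem_v s hs))
    simpa [abs_sub_comm] using this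
  calc ‖(∫ t in z.re..w.re, (q (apsE t w.im) - q z))
        + Complex.I * (∫ s in z.im..w.im, (q (apsE z.re s) - q z))‖
      ≤ ‖∫ t in z.re..w.re, (q (apsE t w.im) - q z)‖
        + ‖Complex.I * (∫ s in z.im..w.im, (q (apsE z.re s) - q z))‖ := norm_add_le _ _
    _ = ‖∫ t in z.re..w.re, (q (apsE t w.im) - q z)‖
        + ‖∫ s in z.im..w.im, (q (apsE z.re s) - q z)‖ := by
          rw [norm_mul]; simp
    _ ≤ ε / 2 * |w.re - z.re| + ε / 2 * |w.im - z.im| := add_le_add hest_h hest_v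
    _ ≤ ε / 2 * ‖w - z‖ + ε / 2 * ‖w - z‖ := by
          have h2 : (0:ℝ) ≤ ε / 2 := le_of_lt hεhalf
          exact add_le_add (mul_le_mul_of_nonneg_left habs_re h2)
            (mul_le_mul_of_nonneg_left habs_im h2)
    _ = ε * ‖w - z‖ := by ring

end Prim4

lemma aps_const_of_deriv_zero {c : ℝ} {φ : ℂ → ℂ}
    (h : ∀ z ∈ apsStrip c, HasDerivAt φ 0 z) {z w : ℂ}
    (hz : z ∈ apsStrip c) (hw : w ∈ apsStrip c) : φ z = φ w := by
  refine Convex.is_const_of_fderivWithin_eq_zero (𝕜 := ℂ) (apsStrip_convex c)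
    (fun u hu => ((h u hu).differentiableAt).differentiableWithinAt) (fun u hu => ?_) hz hw
  rw [fderivWithin_of_isOpen (apsStrip_open c) hu]
  have := ((h u hu).hasFDerivAt).fderiv
  rw [this]
  exact ContinuousLinearMap.ext fun v => by simp

/-- A 1-periodic function holomorphic on a strip around `ℝ` and
nonvanishing on the reals has a 2-periodic holomorphic square root on a possibly
narrower strip. -/
theorem analytic_periodic_sqrt
    (δ : ℝ) (hδ : 0 < δ) (f : ℂ → ℂ)
    (hf : DifferentiableOn ℂ f {z : ℂ | |z.im| < δ})
    (hper : ∀ z : ℂ, |z.im| < δ → f (z + 1) = f z)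
    (hmin : ∀ x ∈ Set.Icc (0:ℝ) 1, f (x : ℂ) ≠ 0) :
    ∃ δ' : ℝ, 0 < δ' ∧ δ' ≤ δ ∧ ∃ g : ℂ → ℂ,
      DifferentiableOn ℂ g {z : ℂ | |z.im| < δ'} ∧
      (∀ z : ℂ, |z.im| < δ' → g (z + 2) = g z) ∧
      (∀ z : ℂ, |z.im| < δ' → g z ^ 2 = f z) := by
  classical
  have hfS : DifferentiableOn ℂ f (apsStrip δ) := hf
  -- integer shifts
  have hshiftZ : ∀ (n : ℤ) (z : ℂ), |z.im| < δ → f (z + n) = f z := by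
    intro n
    induction n using Int.induction_on with
    | zero => intro z hz; simp
    | succ k ih =>
      intro z hz
      have h1 : z + ((k : ℤ) + 1 : ℤ) = (z + (k : ℤ)) + 1 := by push_cast; ring
      rw [h1, hper _ (by simpa using hz), ih z hz]
    | pred k ih =>
      intro z hz
      have h1 : f ((z + (-(k:ℤ) - 1 : ℤ)) + 1) = f (z + (-(k:ℤ) - 1 : ℤ)) :=
        hper _ (by simpa using hz)
      have h2 : (z + (-(k:ℤ) - 1 : ℤ)) + 1 = z + (-(k:ℤ) : ℤ) := by push_cast; ring
      rw [h2] at h1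
      rw [← h1, ih z hz]
  -- reduction to the fundamental domain
  have hred : ∀ z : ℂ, |z.im| < δ →
      f z = f (z - (⌊z.re⌋ : ℂ)) ∧ (z - (⌊z.re⌋ : ℂ)).re ∈ Set.Icc (0:ℝ) 1 ∧
        (z - (⌊z.re⌋ : ℂ)).im = z.im := by
    intro z hz
    have him : (z - (⌊z.re⌋ : ℂ)).im = z.im := by simp
    have hre : (z - (⌊z.re⌋ : ℂ)).re = Int.fract z.re := by
      rw [Complex.sub_re, Int.fract]
      norm_num
    refine ⟨?_, ?_, him⟩
    · have := hshiftZ ⌊z.re⌋ (z - (⌊z.re⌋ : ℂ)) (by rw [him]; exact hz)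
      rw [← this]; ring_nf
    · rw [hre]
      exact ⟨Int.fract_nonneg _, (Int.fract_lt_one _).le⟩
  -- find δ' with nonvanishing on the strip
  obtain ⟨δ', hδ'pos, hδ'le, hnv⟩ :
      ∃ δ' : ℝ, 0 < δ' ∧ δ' ≤ δ ∧ ∀ z : ℂ, |z.im| < δ' → f z ≠ 0 := by
    set K : Set ℂ := Set.Icc (0:ℝ) 1 ×ℂ Set.Icc (-(δ/2)) (δ/2) with hK
    have hKS : K ⊆ apsStrip δ := by
      intro z hz
      rw [Complex.mem_reProdIm] at hz
      have := hz.2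
      simp only [Set.mem_Icc] at this
      show |z.im| < δ
      rw [abs_lt]; constructor <;> [linarith [this.1]; linarith [this.2]]
    have hKcomp : IsCompact K :=
      Metric.isCompact_of_isClosed_isBounded (isClosed_Icc.reProdIm isClosed_Icc)
        ((Metric.isBounded_Icc _ _).reProdIm (Metric.isBounded_Icc _ _))
    set Z : Set ℂ := K ∩ f ⁻¹' {0} with hZ
    have hZclosed : IsClosed Z :=
      (hfS.continuousOn.mono hKS).preimage_isClosed_of_isClosed
        (isClosed_Icc.reProdIm isClosed_Icc) isClosed_singleton
    have hZcomp : IsCompact Z := hKcomp.of_isClosed_subset hZclosed Set.inter_subset_left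
    -- membership of reduced points
    have hredK : ∀ z : ℂ, |z.im| ≤ δ/2 → (z - (⌊z.re⌋ : ℂ)) ∈ K := by
      intro z hz
      have hz' : |z.im| < δ := lt_of_le_of_lt hz (by linarith)
      obtain ⟨-, hre, him⟩ := hred z hz'
      rw [Complex.mem_reProdIm, him]
      exact ⟨hre, by rw [Set.mem_Icc, ← abs_le]; exact hz⟩
    by_cases hne : Z.Nonempty
    · obtain ⟨z₀, hz₀Z, hz₀min⟩ := hZcomp.exists_isMinOn hne
        ((_root_.continuous_abs.comp Complex.continuous_im).continuousOn)
      have hz₀K : z₀ ∈ K := hz₀Z.1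
      have hz₀0 : f z₀ = 0 := hz₀Z.2
      have hm : 0 < |z₀.im| := by
        rcases eq_or_ne z₀.im 0 with h | h
        · exfalso
          have hz₀real : z₀ = ((z₀.re : ℝ) : ℂ) := by
            apply Complex.ext <;> simp [h]
          rw [Complex.mem_reProdIm] at hz₀K
          exact hmin z₀.re hz₀K.1 (by rw [← hz₀real]; exact hz₀0)
        · exact abs_pos.2 h
      refine ⟨min (δ/2) |z₀.im|, lt_min (by linarith) hm, (min_le_left _ _).trans (by linarith), ?_⟩
      intro z hz hfz
      have hz2 : |z.im| < δ/2 := lt_of_lt_of_le hz (min_le_left _ _)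
      have hz' : |z.im| < δ := by linarith
      obtain ⟨hfzred, -, him⟩ := hred z hz'
      have hwZ : (z - (⌊z.re⌋ : ℂ)) ∈ Z :=
        ⟨hredK z hz2.le, by simp [Set.mem_preimage, ← hfzred, hfz]⟩
      have h6 : |z₀.im| ≤ |(z - (⌊z.re⌋ : ℂ)).im| := hz₀min hwZ
      rw [him] at h6
      have hzm : |z.im| < |z₀.im| := lt_of_lt_of_le hz (min_le_right _ _)
      exact absurd h6 (not_le.2 hzm)
    · refine ⟨δ/2, by linarith, by linarith, ?_⟩
      intro z hz hfz
      have hz' : |z.im| < δ := by linarith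
      obtain ⟨hfzred, -, him⟩ := hred z hz'
      have hwZ : (z - (⌊z.re⌋ : ℂ)) ∈ Z :=
        ⟨hredK z hz.le, by simp [Set.mem_preimage, ← hfzred, hfz]⟩
      exact hne ⟨_, hwZ⟩
  -- setup on the narrower strip
  have hsub : apsStrip δ' ⊆ apsStrip δ := fun z hz => lt_of_lt_of_le hz hδ'le
  have hfS' : DifferentiableOn ℂ f (apsStrip δ') := hfS.mono hsub
  have hdf : DifferentiableOn ℂ (deriv f) (apsStrip δ') :=
    ((hfS.analyticOnNhd (apsStrip_open δ)).deriv).differentiableOn.mono hsub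
  set q : ℂ → ℂ := fun z => deriv f z / f z with hq
  have hqdiff : DifferentiableOn ℂ q (apsStrip δ') :=
    hdf.div hfS' (fun z hz => hnv z hz)
  set H : ℂ → ℂ := apsH q with hH
  have hHd : ∀ z ∈ apsStrip δ', HasDerivAt H (q z) z :=
    fun z hz => apsH_hasDerivAt hδ'pos hqdiff hz
  have h0mem : (0:ℂ) ∈ apsStrip δ' := by simpa [apsStrip] using hδ'pos
  have hf0 : f 0 ≠ 0 := hnv 0 (by simpa using hδ'pos)
  set c₀ : ℂ := Complex.log (f 0) with hc₀def
  have hc₀ : Complex.exp c₀ = f 0 := Complex.exp_log hf0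
  -- f = exp (H + c₀)
  have hexp : ∀ z ∈ apsStrip δ', f z = Complex.exp (H z + c₀) := by
    have hφd : ∀ z ∈ apsStrip δ',
        HasDerivAt (fun w => f w * Complex.exp (-(H w) - c₀)) 0 z := by
      intro z hz
      have hfz : HasDerivAt f (deriv f z) z :=
        (hfS'.differentiableAt ((apsStrip_open δ').mem_nhds hz)).hasDerivAt
      have h1 : HasDerivAt (fun w => -(H w) - c₀) (-(q z)) z :=
        ((hHd z hz).neg).sub_const c₀
      have hE : HasDerivAt (fun w => Complex.exp (-(H w) - c₀))
          (Complex.exp (-(H z) - c₀) * (-(q z))) z := h1.cexp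
      have hP := hfz.mul hE
      refine hP.congr_deriv ?_
      rw [hq]
      field_simp [hnv z hz]
      ring
    have hconst : ∀ z ∈ apsStrip δ',
        f z * Complex.exp (-(H z) - c₀) = f 0 * Complex.exp (-(H 0) - c₀) :=
      fun z hz => aps_const_of_deriv_zero hφd hz h0mem
    intro z hz
    have h1 := hconst z hz
    rw [hH, apsH_zero] at h1
    have h2 : f 0 * Complex.exp (-0 - c₀) = 1 := by
      rw [neg_zero, zero_sub, Complex.exp_neg, hc₀]
      field_simp
    rw [h2] at h1
    have h3 : Complex.exp (-(H z) - c₀) * Complex.exp (H z + c₀) = 1 := by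
      rw [← Complex.exp_add]; ring_nf; exact Complex.exp_zero
    calc f z = f z * (Complex.exp (-(H z) - c₀) * Complex.exp (H z + c₀)) := by
          rw [h3, mul_one]
      _ = (f z * Complex.exp (-(H z) - c₀)) * Complex.exp (H z + c₀) := by ring
      _ = Complex.exp (H z + c₀) := by rw [h1, one_mul]
  -- the square root
  set g : ℂ → ℂ := fun z => Complex.exp ((H z + c₀) / 2) with hg
  have hHdiffOn : DifferentiableOn ℂ H (apsStrip δ') :=
    fun z hz => ((hHd z hz).differentiableAt).differentiableWithinAt
  have hgdiff : DifferentiableOn ℂ g (apsStrip δ') :=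
    (((hHdiffOn.add_const c₀).div_const 2).cexp)
  have hgne : ∀ z : ℂ, g z ≠ 0 := fun z => Complex.exp_ne_zero _
  have hg2 : ∀ z ∈ apsStrip δ', g z ^ 2 = f z := by
    intro z hz
    rw [hg]
    simp only
    rw [sq, ← Complex.exp_add]
    rw [hexp z hz]
    congr 1
    ring
  -- 2-periodicity
  have hmem1 : ∀ z : ℂ, z ∈ apsStrip δ' → z + 1 ∈ apsStrip δ' := by
    intro z hz; simpa [apsStrip] using hz
  set ψ : ℂ → ℂ := fun z => g (z + 1) / g z with hψ
  have hψsq : ∀ z ∈ apsStrip δ', ψ z ^ 2 = 1 := by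
    intro z hz
    rw [hψ]
    simp only
    rw [div_pow, hg2 _ (hmem1 z hz), hg2 z hz, hper z (hsub hz), div_self (hnv z hz)]
  have hψdiffAt : ∀ z ∈ apsStrip δ', DifferentiableAt ℂ ψ z := by
    intro z hz
    have h1 : DifferentiableAt ℂ g (z + 1) :=
      hgdiff.differentiableAt ((apsStrip_open δ').mem_nhds (hmem1 z hz))
    have h2 : DifferentiableAt ℂ g z :=
      hgdiff.differentiableAt ((apsStrip_open δ').mem_nhds hz)
    exact (h1.comp z (differentiableAt_id.add_const 1)).div h2 (hgne z)
  have hψ0 : ∀ z ∈ apsStrip δ', HasDerivAt ψ 0 z := by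
    intro z hz
    have hev : (fun w => ψ w ^ 2) =ᶠ[nhds z] fun _ => 1 := by
      filter_upwards [(apsStrip_open δ').mem_nhds hz] with w hw
      exact hψsq w hw
    have h1 : deriv (fun w => ψ w ^ 2) z = 0 := by
      rw [hev.deriv_eq]; exact deriv_const _ _
    have h2 : HasDerivAt (fun w => ψ w ^ 2) (2 * ψ z * deriv ψ z) z := by
      have := ((hψdiffAt z hz).hasDerivAt).pow 2
      exact this.congr_deriv (by simp)
    have hψne : ψ z ≠ 0 := by
      intro h
      have := hψsq z hz
      rw [h] at this
      simp at this
    have h3 : deriv ψ z = 0 := by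
      have h4 := h2.deriv
      rw [h1] at h4
      have h5 : (2 : ℂ) * ψ z ≠ 0 := by
        simp [hψne]
      field_simp at h4
      exact (mul_eq_zero.1 h4.symm).resolve_left h5
    have := (hψdiffAt z hz).hasDerivAt
    rwa [h3] at this
  have hψconst : ∀ z ∈ apsStrip δ', ψ z = ψ 0 :=
    fun z hz => aps_const_of_deriv_zero hψ0 hz h0mem
  have hψ0sq : ψ 0 ^ 2 = 1 := hψsq 0 h0mem
  have hper2 : ∀ z : ℂ, z ∈ apsStrip δ' → g (z + 2) = g z := by
    intro z hz
    have hz1 : z + 1 ∈ apsStrip δ' := hmem1 z hz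
    have e1 : g (z + 1) = ψ z * g z := by
      rw [hψ]; simp only; rw [div_mul_cancel₀ _ (hgne z)]
    have e2 : g (z + 2) = ψ (z + 1) * g (z + 1) := by
      rw [hψ]
      simp only
      rw [div_mul_cancel₀ _ (hgne (z+1))]
      congr 1
      ring
    rw [e2, hψconst _ hz1, e1, hψconst _ hz, ← mul_assoc, ← sq, hψ0sq, one_mul]
  exact ⟨δ', hδ'pos, hδ'le, g, hgdiff, fun z hz => hper2 z hz, fun z hz => hg2 z hz⟩
end

section
/- Let δ > 0 and let c be holomorphic on an open neighborhood of the closed strip {z ∈ ℂ : |Im z| ≤ δ}, 1-periodic (c(z+1) = c(z)), with c(z) ≠ 0 for all z with |Im z| ≤ δ. Then the function I_ε(c) := ∫₀¹ log|c(x+iε)| dx is affine in ε on [−δ, δ] with slope in 2πℤ: there exist k ∈ ℤ and d ∈ ℝ such that ∫₀¹ log|c(x+iε)| dx = 2πk·ε + d for all ε ∈ [−δ, δ]. -/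
open Complex MeasureTheory Metric Set intervalIntegral
open scoped Real

lemma hasDerivAt_log_complex_abs {g : ℝ → ℂ} {g' : ℂ} {t : ℝ}
    (hg : HasDerivAt g g' t) (h0 : g t ≠ 0) :
    HasDerivAt (fun s => Real.log ‖g s‖) ((g' / g t).re) t := by
  have hfun : (fun s => Real.log ‖g s‖)
      = fun s => Real.log (Complex.normSq (g s)) / 2 := by
    funext s
    rw [Complex.norm_def, Real.log_sqrt (Complex.normSq_nonneg _)]
  rw [hfun]
  have hre : HasDerivAt (fun s => (g s).re) g'.re t :=
    Complex.reCLM.hasFDerivAt.comp_hasDerivAt t hg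
  have him : HasDerivAt (fun s => (g s).im) g'.im t :=
    Complex.imCLM.hasFDerivAt.comp_hasDerivAt t hg
  have hu : HasDerivAt (fun s => Complex.normSq (g s))
      (g'.re * (g t).re + (g t).re * g'.re + (g'.im * (g t).im + (g t).im * g'.im)) t := by
    simp only [Complex.normSq_apply]
    exact (hre.mul hre).add (him.mul him)
  have hu0 : Complex.normSq (g t) ≠ 0 := by
    simpa [Complex.normSq_eq_zero] using h0
  have hlog := ((Real.hasDerivAt_log hu0).comp t hu).div_const 2
  refine hlog.congr_deriv ?_
  rw [Complex.div_re, Complex.normSq_apply]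
  have h2 : (g t).re * (g t).re + (g t).im * (g t).im ≠ 0 := by
    simpa [Complex.normSq_apply] using hu0
  field_simp
  ring

/-- If `c` is 1-periodic, holomorphic on a neighborhood of the closed strip
`|Im z| ≤ δ` and nonvanishing there, then `ε ↦ ∫₀¹ log |c(x+iε)| dx` is affine on `[-δ, δ]`
with slope in `2πℤ`. -/
theorem logIntegral_affine_of_nonvanishing
    (δ : ℝ) (hδ : 0 < δ) (c : ℂ → ℂ)
    (hc : ∃ U : Set ℂ, IsOpen U ∧ {z : ℂ | |z.im| ≤ δ} ⊆ U ∧ DifferentiableOn ℂ c U)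
    (hper : ∀ z : ℂ, |z.im| ≤ δ → c (z + 1) = c z)
    (hnz : ∀ z : ℂ, |z.im| ≤ δ → c z ≠ 0) :
    ∃ (k : ℤ) (d : ℝ), ∀ ε ∈ Set.Icc (-δ) δ,
      (∫ x in (0:ℝ)..1, Real.log ‖c ((x : ℂ) + (ε : ℂ) * Complex.I)‖) =
        2 * π * k * ε + d := by
  obtain ⟨U, hUo, hUs, hUd⟩ := hc
  set V : Set ℂ := U ∩ c ⁻¹' {0}ᶜ with hV
  have hVo : IsOpen V := hUd.continuousOn.isOpen_inter_preimage hUo isOpen_compl_singleton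
  have hSV : ∀ z : ℂ, |z.im| ≤ δ → z ∈ V := fun z hz => ⟨hUs hz, hnz z hz⟩
  have hVda : ∀ z ∈ V, DifferentiableAt ℂ c z := fun z hz =>
    (hUd.differentiableAt (hUo.mem_nhds hz.1))
  have hVnz : ∀ z ∈ V, c z ≠ 0 := fun z hz => hz.2
  have han : AnalyticOnNhd ℂ c V := (hUd.mono inter_subset_left).analyticOnNhd hVo
  have hld : ∀ z ∈ V, DifferentiableAt ℂ (logDeriv c) z := by
    intro z hz
    have h1 : DifferentiableAt ℂ (deriv c) z := (han.deriv z hz).differentiableAt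
    have : DifferentiableAt ℂ (fun w => deriv c w / c w) z :=
      h1.div (hVda z hz) (hVnz z hz)
    exact this.congr_of_eventuallyEq (by filter_upwards with w using (logDeriv_apply c w))
  have hldc : ∀ z ∈ V, ContinuousAt (logDeriv c) z := fun z hz => (hld z hz).continuousAt
  -- periodicity of logDeriv on the open strip
  have hOo : IsOpen {z : ℂ | |z.im| < δ} :=
    isOpen_lt (continuous_abs.comp Complex.continuous_im) continuous_const
  have hldper : ∀ z : ℂ, |z.im| < δ → logDeriv c (z + 1) = logDeriv c z := by
    intro z hz
    have hev : (fun w => c (w + 1)) =ᶠ[nhds z] c := by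
      filter_upwards [hOo.mem_nhds hz] with w hw using hper w (le_of_lt hw)
    have hd : deriv c (z + 1) = deriv c z := by
      rw [← deriv_comp_add_const c 1 z]
      exact hev.deriv_eq
    rw [logDeriv_apply, logDeriv_apply, hd, hper z (le_of_lt hz)]
  -- the winding integral
  set w : ℂ := ∫ x in (0:ℝ)..1, logDeriv c x with hw
  have hmemR : ∀ x : ℝ, ((x : ℂ)) ∈ V := fun x => hSV x (by simp [hδ.le])
  have hcont_real : Continuous fun x : ℝ => logDeriv c x := by
    refine continuous_iff_continuousAt.mpr fun x => ?_
    exact (hldc x (hmemR x)).comp Complex.continuous_ofReal.continuousAt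
  -- w ∈ 2πiℤ
  obtain ⟨n, hn⟩ : ∃ n : ℤ, w = n * (2 * π * I) := by
    set p : ℝ → ℂ := fun t => ∫ x in (0:ℝ)..t, logDeriv c x with hp
    have hpd : ∀ t : ℝ, HasDerivAt p (logDeriv c t) t := by
      intro t
      exact integral_hasDerivAt_right (hcont_real.intervalIntegrable _ _)
        (hcont_real.stronglyMeasurableAtFilter _ _)
        hcont_real.continuousAt
    set g : ℝ → ℂ := fun t => c t * Complex.exp (-p t) with hgdef
    have hg : ∀ t : ℝ, HasDerivAt g 0 t := by
      intro t
      have h1 : HasDerivAt (fun t : ℝ => c t) (deriv c t) t :=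
        ((hVda _ (hmemR t)).hasDerivAt).comp_ofReal
      have h2 : HasDerivAt (fun t : ℝ => Complex.exp (-p t))
          (Complex.exp (-p t) * (-(logDeriv c t))) t := ((hpd t).neg).cexp
      have := h1.mul h2
      refine this.congr_deriv ?_
      rw [logDeriv_apply]
      field_simp [hVnz _ (hmemR t)]
      ring
    have hgc : g 1 = g 0 :=
      is_const_of_deriv_eq_zero (fun t => (hg t).differentiableAt) (fun t => (hg t).deriv) 1 0
    have hp0 : p 0 = 0 := integral_same
    have hp1 : p 1 = w := by simp [hp, hw]
    have hc10 : c 1 = c 0 := by simpa using hper 0 (by simp [hδ.le])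
    have hc0 : (c 0 : ℂ) ≠ 0 := hnz 0 (by simp [hδ.le])
    have hexp : Complex.exp (-w) = 1 := by
      have : c 1 * Complex.exp (-w) = c 0 * 1 := by
        simpa [hgdef, hp0, hp1] using hgc
      rw [hc10] at this
      field_simp at this
      exact this
    obtain ⟨n, hn⟩ := Complex.exp_eq_one_iff.mp hexp
    exact ⟨-n, by push_cast; linear_combination -hn⟩
  -- constancy of the logDeriv line integrals
  have hG : ∀ ε ∈ Icc (-δ) δ,
      (∫ x in (0:ℝ)..1, logDeriv c ((x : ℂ) + (ε : ℂ) * I)) = w := by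
    intro ε hε
    have habs : |ε| ≤ δ := abs_le.mpr ⟨hε.1, hε.2⟩
    have hrect := Complex.integral_boundary_rect_eq_zero_of_differentiableOn (logDeriv c)
      0 (1 + ε * I) ?_
    · simp only [Complex.zero_re, Complex.zero_im, Complex.add_re, Complex.one_re,
        Complex.mul_re, Complex.I_re, Complex.ofReal_re, Complex.I_im, Complex.ofReal_im,
        Complex.add_im, Complex.one_im, Complex.mul_im, Complex.ofReal_zero, zero_mul,
        add_zero, mul_zero, sub_zero, mul_one, zero_sub, zero_add, Complex.ofReal_one,
        smul_eq_mul] at hrect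
      have hvert : (∫ y in (0:ℝ)..ε, logDeriv c (1 + (y:ℂ) * I))
          = ∫ y in (0:ℝ)..ε, logDeriv c ((y:ℂ) * I) := by
        apply intervalIntegral.integral_congr_ae
        have hne : ∀ᵐ y : ℝ, y ≠ ε := by
          rw [ae_iff]
          simpa using measure_singleton ε
        filter_upwards [hne] with y hy hyI
        have hylt : |y| < δ := by
          rcases le_total 0 ε with h | h
          · rw [uIoc_of_le h] at hyI
            have h1 := hyI.1
            have h2 := lt_of_le_of_ne hyI.2 hy
            rw [abs_lt]
            constructor <;> nlinarith [abs_le.mp habs]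
          · rw [uIoc_of_ge h] at hyI
            have h1 := hyI.1
            have h2 := hyI.2
            rw [abs_lt]
            constructor <;> nlinarith [abs_le.mp habs]
        have heq : (1 : ℂ) + (y:ℂ) * I = ((y:ℂ) * I) + 1 := by ring
        rw [heq, hldper _ (by simpa using hylt)]
      rw [hvert] at hrect
      linear_combination -hw - hrect
    · rintro z ⟨hz1, hz2⟩
      refine (hld z (hSV z ?_)).differentiableWithinAt
      simp only [Complex.zero_im, Complex.add_im, Complex.one_im, Complex.mul_im,
        Complex.ofReal_re, Complex.I_im, Complex.ofReal_im, Complex.I_re, mul_zero,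
        zero_add, mul_one, add_zero] at hz2
      have h1 : min (0:ℝ) ε ≤ z.im := by
        rcases hz2 with ⟨h, _⟩; exact h
      have h2 : z.im ≤ max (0:ℝ) ε := hz2.2
      have := abs_le.mp habs
      rw [abs_le]
      constructor
      · calc -δ ≤ min (0:ℝ) ε := by rcases le_total 0 ε with h|h <;> simp [min_eq_left, min_eq_right, h] <;> linarith
          _ ≤ z.im := h1
      · calc z.im ≤ max (0:ℝ) ε := h2
          _ ≤ δ := by rcases le_total 0 ε with h|h <;> simp [max_eq_left, max_eq_right, h] <;> linarith
  -- thickening of the compact box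
  have hBc : IsCompact ((uIcc (0:ℝ) 1) ×ℂ (Icc (-δ) δ)) :=
    Metric.isCompact_of_isClosed_isBounded
      ((by rw [Set.uIcc_of_le (by norm_num : (0:ℝ) ≤ 1)]; exact isClosed_Icc :
        IsClosed (uIcc (0:ℝ) 1)).reProdIm isClosed_Icc)
      ((Metric.isBounded_Icc _ _).reProdIm (Metric.isBounded_Icc _ _))
  have hBV : (uIcc (0:ℝ) 1) ×ℂ (Icc (-δ) δ) ⊆ V := fun z hz =>
    hSV z (abs_le.mpr ⟨hz.2.1, hz.2.2⟩)
  obtain ⟨ρ, hρ, hρsub⟩ := hBc.exists_thickening_subset_open hVo hBV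
  set K' : Set ℂ := (uIcc (0:ℝ) 1) ×ℂ (Icc (-(δ+ρ/2)) (δ+ρ/2)) with hK'
  have hK'sub : K' ⊆ V := by
    intro z hz
    apply hρsub
    rw [Metric.mem_thickening_iff]
    set y : ℝ := max (-δ) (min δ z.im) with hy
    refine ⟨(z.re : ℂ) + (y:ℂ) * I, ⟨by simpa using hz.1, ?_⟩, ?_⟩
    · show ((z.re:ℂ) + (y:ℂ) * I).im ∈ Icc (-δ) δ
      have him2 : ((z.re:ℂ) + (y:ℂ) * I).im = y := by simp
      rw [him2, mem_Icc]
      exact ⟨le_max_left _ _, max_le (by linarith) (min_le_left _ _)⟩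
    · have hre : z.re = ((z.re : ℂ) + (y:ℂ) * I).re := by simp
      rw [Complex.dist_of_re_eq hre]
      have him : ((z.re : ℂ) + (y:ℂ) * I).im = y := by simp
      rw [him, Real.dist_eq]
      have hzi : z.im ∈ Icc (-(δ+ρ/2)) (δ+ρ/2) := hz.2
      rw [mem_Icc] at hzi
      have : |z.im - y| ≤ ρ/2 := by
        rw [hy, abs_le]
        rcases le_total z.im (-δ) with h1 | h1
        · rw [min_eq_right (by linarith), max_eq_left (by linarith)]
          constructor <;> linarith
        · rcases le_total z.im δ with h2 | h2
          · rw [min_eq_right h2, max_eq_right h1]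
            simp
            linarith
          · rw [min_eq_left h2, max_eq_right (by linarith)]
            constructor <;> linarith
      linarith
  have hK'c : IsCompact K' :=
    Metric.isCompact_of_isClosed_isBounded
      ((by rw [Set.uIcc_of_le (by norm_num : (0:ℝ) ≤ 1)]; exact isClosed_Icc :
        IsClosed (uIcc (0:ℝ) 1)).reProdIm isClosed_Icc)
      ((Metric.isBounded_Icc _ _).reProdIm (Metric.isBounded_Icc _ _))
  obtain ⟨M, hM⟩ := hK'c.exists_bound_of_continuousOn
    (fun z hz => (hldc z (hK'sub hz)).continuousWithinAt)
  have hmemK' : ∀ x : ℝ, x ∈ uIcc (0:ℝ) 1 → ∀ ε : ℝ, |ε| ≤ δ + ρ/2 →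
      ((x:ℂ) + (ε:ℂ) * I) ∈ K' := by
    intro x hx ε hε
    rw [abs_le] at hε
    constructor
    · show ((x:ℂ) + (ε:ℂ) * I).re ∈ uIcc (0:ℝ) 1
      simpa using hx
    · show ((x:ℂ) + (ε:ℂ) * I).im ∈ Icc (-(δ+ρ/2)) (δ+ρ/2)
      have : ((x:ℂ) + (ε:ℂ) * I).im = ε := by simp
      rw [this, mem_Icc]
      exact ⟨hε.1, hε.2⟩
  set F : ℝ → ℝ := fun ε => ∫ x in (0:ℝ)..1, Real.log ‖c ((x:ℂ) + (ε:ℂ) * I)‖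
    with hF
  have hΙ : Set.uIoc (0:ℝ) 1 ⊆ uIcc (0:ℝ) 1 := Ioc_subset_Icc_self
  have hldcont : ∀ ε : ℝ, |ε| ≤ δ + ρ/2 →
      ContinuousOn (fun x : ℝ => logDeriv c ((x:ℂ) + (ε:ℂ) * I)) (uIcc (0:ℝ) 1) := by
    intro ε hε x hx
    have hmem := hK'sub (hmemK' x hx ε hε)
    exact (ContinuousAt.comp (f := fun x : ℝ => (x:ℂ) + (ε:ℂ)*I)
      (hldc _ hmem) (by fun_prop)).continuousWithinAt
  have hFcont : ∀ ε : ℝ, |ε| ≤ δ + ρ/2 →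
      ContinuousOn (fun x : ℝ => Real.log ‖c ((x:ℂ) + (ε:ℂ) * I)‖) (uIcc (0:ℝ) 1) := by
    intro ε hε x hx
    have hmem := hK'sub (hmemK' x hx ε hε)
    have h1 : ContinuousAt (fun x : ℝ => c ((x:ℂ) + (ε:ℂ) * I)) x :=
      ContinuousAt.comp (f := fun x : ℝ => (x:ℂ) + (ε:ℂ)*I)
        ((hVda _ hmem).continuousAt) (by fun_prop)
    have h2 : ContinuousAt (fun x : ℝ => ‖c ((x:ℂ) + (ε:ℂ) * I)‖) x :=
      ContinuousAt.comp (f := fun x : ℝ => c ((x:ℂ) + (ε:ℂ)*I))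
        (continuous_norm.continuousAt) h1
    exact (ContinuousAt.comp (f := fun x : ℝ => ‖c ((x:ℂ) + (ε:ℂ)*I)‖)
      (Real.continuousAt_log (norm_ne_zero_iff.mpr (hVnz _ hmem))) h2).continuousWithinAt
  have hδρ : ∀ ε₀ : ℝ, ε₀ ∈ Icc (-δ) δ → |ε₀| ≤ δ + ρ/2 := by
    intro ε₀ h
    rw [abs_le]
    constructor <;> [linarith [h.1]; linarith [h.2]]
  have hFderiv : ∀ ε₀ ∈ Icc (-δ) δ, HasDerivAt F (-(2*π*n)) ε₀ := by
    intro ε₀ hε₀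
    have hball : ∀ ε ∈ ball ε₀ (ρ/2), |ε| ≤ δ + ρ/2 := by
      intro ε hε
      rw [mem_ball, Real.dist_eq] at hε
      have h2 := abs_lt.mp hε
      rw [abs_le]
      constructor
      · linarith [hε₀.1, h2.1]
      · linarith [hε₀.2, h2.2]
    have hkey := intervalIntegral.hasDerivAt_integral_of_dominated_loc_of_deriv_le
      (F := fun (ε : ℝ) (x : ℝ) => Real.log ‖c ((x:ℂ) + (ε:ℂ) * I)‖)
      (F' := fun (ε : ℝ) (x : ℝ) => -((logDeriv c ((x:ℂ) + (ε:ℂ) * I)).im))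
      (bound := fun _ => M) (a := 0) (b := 1) (x₀ := ε₀) (μ := volume)
      (Metric.ball_mem_nhds ε₀ (half_pos hρ)) ?_ ?_ ?_ ?_ ?_ ?_
    · have hii : IntervalIntegrable (fun x : ℝ => logDeriv c ((x:ℂ) + (ε₀:ℂ) * I)) volume 0 1 :=
        (hldcont ε₀ (hδρ ε₀ hε₀)).intervalIntegrable
      have hcomm := Complex.imCLM.intervalIntegral_comp_comm hii
      have hval : (∫ x in (0:ℝ)..1, -((logDeriv c ((x:ℂ) + (ε₀:ℂ) * I)).im)) = -(2*π*n) := by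
        rw [intervalIntegral.integral_neg]
        have him : (∫ x in (0:ℝ)..1, (logDeriv c ((x:ℂ) + (ε₀:ℂ) * I)).im)
            = (∫ x in (0:ℝ)..1, logDeriv c ((x:ℂ) + (ε₀:ℂ) * I)).im := by
          simpa only [Complex.imCLM_apply] using hcomm
        rw [him, hG ε₀ hε₀, hn]
        simp [Complex.mul_im]
        ring
      rw [← hval]
      exact hkey.2
    · filter_upwards [Metric.ball_mem_nhds ε₀ (half_pos hρ)] with ε hε
      exact ((hFcont ε (hball ε hε)).mono hΙ).aestronglyMeasurable measurableSet_uIoc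
    · exact (hFcont ε₀ (hδρ ε₀ hε₀)).intervalIntegrable
    · exact ((Complex.continuous_im.comp_continuousOn ((hldcont ε₀ (hδρ ε₀ hε₀)).mono hΙ)).neg).aestronglyMeasurable measurableSet_uIoc
    · filter_upwards with t ht ε hε
      have hmem := hmemK' t (hΙ ht) ε (hball ε hε)
      have := hM _ hmem
      calc ‖-((logDeriv c ((t:ℂ) + (ε:ℂ) * I)).im)‖
          = |(logDeriv c ((t:ℂ) + (ε:ℂ) * I)).im| := by rw [norm_neg, Real.norm_eq_abs]
        _ ≤ ‖logDeriv c ((t:ℂ) + (ε:ℂ) * I)‖ := Complex.abs_im_le_norm _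
        _ ≤ M := this
    · exact intervalIntegrable_const
    · filter_upwards with t ht ε hε
      have hz : ((t:ℂ) + (ε:ℂ) * I) ∈ V := hK'sub (hmemK' t (hΙ ht) ε (hball ε hε))
      have hinner : HasDerivAt (fun u : ℂ => (t:ℂ) + u * I) I (ε:ℂ) := by
        simpa using ((hasDerivAt_id ((ε:ℂ))).mul_const I).const_add (t:ℂ)
      have hout : HasDerivAt c (deriv c ((t:ℂ) + (ε:ℂ) * I)) ((t:ℂ) + (ε:ℂ) * I) :=
        (hVda _ hz).hasDerivAt
      have hcomp : HasDerivAt (fun u : ℂ => c ((t:ℂ) + u * I))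
          (deriv c ((t:ℂ) + (ε:ℂ) * I) * I) (ε:ℂ) :=
        HasDerivAt.comp (h := fun u : ℂ => (t:ℂ) + u * I) (h₂ := c) (x := (ε:ℂ)) hout hinner
      have hreal : HasDerivAt (fun ε : ℝ => c ((t:ℂ) + (ε:ℂ) * I))
          (deriv c ((t:ℂ) + (ε:ℂ) * I) * I) ε := hcomp.comp_ofReal
      have hlog := hasDerivAt_log_complex_abs hreal (hVnz _ hz)
      have hvaleq : ((deriv c ((t:ℂ) + (ε:ℂ) * I) * I) / c ((t:ℂ) + (ε:ℂ) * I)).re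
          = -((logDeriv c ((t:ℂ) + (ε:ℂ) * I)).im) := by
        rw [logDeriv_apply, show deriv c ((t:ℂ) + (ε:ℂ) * I) * I / c ((t:ℂ) + (ε:ℂ) * I)
          = (deriv c ((t:ℂ) + (ε:ℂ) * I) / c ((t:ℂ) + (ε:ℂ) * I)) * I by ring,
          Complex.mul_I_re]
      rw [hvaleq] at hlog
      exact hlog
  -- conclusion
  refine ⟨-n, F (-δ) - 2*π*(-n:ℤ)*(-δ), fun ε hε => ?_⟩
  have hH : ∀ x ∈ Icc (-δ) δ,
      HasDerivAt (fun ε => F ε - 2*π*((-n:ℤ):ℝ)*ε) 0 x := by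
    intro x hx
    have := (hFderiv x hx).sub ((hasDerivAt_id x).const_mul (2*π*((-n:ℤ):ℝ)))
    refine this.congr_deriv ?_
    push_cast
    ring
  have hconst := constant_of_has_deriv_right_zero
    (f := fun ε => F ε - 2*π*((-n:ℤ):ℝ)*ε) (a := -δ) (b := δ)
    (fun x hx => ((hH x hx).continuousAt).continuousWithinAt)
    (fun x hx => (hH x (Ico_subset_Icc_self hx)).hasDerivWithinAt)
  have hc := hconst ε hε
  simp only [hF] at hc ⊢
  push_cast at hc ⊢
  linarith
end
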